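/- For every integer k ≥ 1, the function F_k(z,w) = x^{2k-1} a^{2k-1} (y-b)^{2k} + x^{2k-1} (x-a)^{2k-1} b^{2k} - a^{2k-1} (x-a)^{2k-1} y^{2k} is nonnegative for all points z = (x,y) and w = (a,b) in the plane. -/

import Mathlib

private lemma jensen2 (n : ℕ) (hn : Even n) (w₁ w₂ p q : ℝ)
    (h1 : 0 ≤ w₁) (h2 : 0 ≤ w₂) (hw : w₁ + w₂ = 1) :
    (w₁ * p + w₂ * q) ^ n ≤ w₁ * p ^ n + w₂ * q ^ n := by
  simpa using (hn.convexOn_pow).2 (Set.mem_univ p) (Set.mem_univ q) h1 h2 hw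

private lemma key (j : ℕ) (x a s t : ℝ) (ha : 0 ≤ a) (hax : a ≤ x) :
    a ^ (2*j+1) * (x - a) ^ (2*j+1) * (s + t) ^ (2*j+2)
      ≤ x ^ (2*j+1) * (a ^ (2*j+1) * s ^ (2*j+2) + (x - a) ^ (2*j+1) * t ^ (2*j+2)) := by
  have heven : Even (2*j+2) := ⟨j+1, by ring⟩
  rcases ha.eq_or_lt with rfl | ha'
  · simp only [zero_pow (by omega : 2*j+1 ≠ 0), zero_mul, mul_zero, zero_add, sub_zero]
    exact mul_nonneg (pow_nonneg hax _) (mul_nonneg (pow_nonneg hax _) (heven.pow_nonneg t))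
  rcases hax.eq_or_lt with rfl | hax'
  · simp only [sub_self, zero_pow (by omega : 2*j+1 ≠ 0), mul_zero, zero_mul, add_zero]
    exact mul_nonneg (pow_nonneg ha _) (mul_nonneg (pow_nonneg ha _) (heven.pow_nonneg s))
  · have hx : (0:ℝ) < x := lt_trans ha' hax'
    have hr : (0:ℝ) < x - a := by linarith
    have h := jensen2 (2*j+2) ⟨j+1, by ring⟩ ((x-a)/x) (a/x) (s*x/(x-a)) (t*x/a)
      (by positivity) (by positivity) (by field_simp; ring)
    have e1 : (x-a)/x * (s*x/(x-a)) + a/x * (t*x/a) = s + t := by field_simp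
    rw [e1] at h
    have e2 : (x-a)/x * (s*x/(x-a))^(2*j+2) + a/x * (t*x/a)^(2*j+2)
        = x^(2*j+1) * s^(2*j+2) / (x-a)^(2*j+1) + x^(2*j+1) * t^(2*j+2) / a^(2*j+1) := by
      have h1 : (x-a) ≠ 0 := hr.ne'
      have h2 : a ≠ 0 := ha'.ne'
      have h3 : x ≠ 0 := hx.ne'
      rw [div_pow, div_pow, mul_pow, mul_pow]
      field_simp
      ring
    rw [e2] at h
    calc a^(2*j+1) * (x-a)^(2*j+1) * (s+t)^(2*j+2)
        ≤ a^(2*j+1) * (x-a)^(2*j+1) *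
            (x^(2*j+1)*s^(2*j+2)/(x-a)^(2*j+1) + x^(2*j+1)*t^(2*j+2)/a^(2*j+1)) :=
          mul_le_mul_of_nonneg_left h (by positivity)
      _ = x^(2*j+1) * (a^(2*j+1)*s^(2*j+2) + (x-a)^(2*j+1)*t^(2*j+2)) := by
          field_simp

private lemma pos_case (j : ℕ) (x a y b : ℝ) (hx : 0 ≤ x) :
    0 ≤ x^(2*j+1) * a^(2*j+1) * (y-b)^(2*j+2) + x^(2*j+1) * (x-a)^(2*j+1) * b^(2*j+2)
        - a^(2*j+1) * (x-a)^(2*j+1) * y^(2*j+2) := by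
  have hodd : Odd (2*j+1) := ⟨j, by ring⟩
  have heven : Even (2*j+2) := ⟨j+1, by ring⟩
  rcases le_or_gt 0 a with ha | ha
  · rcases le_or_gt a x with hax | hax
    · have h := key j x a (y-b) b ha hax
      rw [show y - b + b = y by ring] at h
      nlinarith [h]
    · have h := key j a x (b-y) y hx (le_of_lt hax)
      rw [show b - y + y = b by ring] at h
      have e2 : (x - a)^(2*j+1) = -((a-x)^(2*j+1)) := by
        rw [show x - a = -(a-x) by ring, hodd.neg_pow]
      have e3 : (b - y)^(2*j+2) = (y - b)^(2*j+2) := by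
        rw [show b - y = -(y-b) by ring, heven.neg_pow]
      rw [e3] at h
      rw [e2]
      nlinarith [h]
  · have h := key j (x-a) x (-b) y hx (by linarith)
    rw [show (-b) + y = y - b by ring, show x - a - x = -a by ring,
      hodd.neg_pow a, heven.neg_pow b] at h
    nlinarith [h]

/-- For every integer `k ≥ 1`, the function
`F_k((x,y),(a,b)) = x^(2k-1) a^(2k-1) (y-b)^(2k) + x^(2k-1) (x-a)^(2k-1) b^(2k)
  - a^(2k-1) (x-a)^(2k-1) y^(2k)` is nonnegative on ℝ² × ℝ². -/
theorem stmt_1 (k : ℕ) (hk : 1 ≤ k) (x y a b : ℝ) :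
    0 ≤ x ^ (2 * k - 1) * a ^ (2 * k - 1) * (y - b) ^ (2 * k)
        + x ^ (2 * k - 1) * (x - a) ^ (2 * k - 1) * b ^ (2 * k)
        - a ^ (2 * k - 1) * (x - a) ^ (2 * k - 1) * y ^ (2 * k) := by
  obtain ⟨j, rfl⟩ : ∃ j, k = j + 1 := ⟨k - 1, by omega⟩
  rw [show 2*(j+1) - 1 = 2*j+1 by omega, show 2*(j+1) = 2*j+2 by ring]
  rcases le_or_gt 0 x with hx | hx
  · exact pos_case j x a y b hx
  · have hodd : Odd (2*j+1) := ⟨j, by ring⟩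
    have h := pos_case j (-x) (-a) y b (by linarith)
    rw [hodd.neg_pow x, hodd.neg_pow a, show -x - -a = -(x - a) by ring,
      hodd.neg_pow (x-a)] at h
    nlinarith [h]
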